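/- For $r_1, r_2 > 0$ and $\epsilon \geq 0$, define $g_j(x_1) = \epsilon$-free profile $r_j - \sqrt{r_j^2 - x_1^2}$ and $\delta(x_1) = 2\epsilon + g_1(x_1) + g_2(x_1)$ for $|x_1| < \min\{r_1,r_2\}$. Then for all $0 < |x_1| < \min\{r_1,r_2\}/2$ one has $\delta''(x_1)\,\delta(x_1) > \frac{1}{2}\,\delta'(x_1)^2$. -/

import Mathlib

lemma sqrtDeriv (r x : ℝ) (h : x ^ 2 < r ^ 2) :
    HasDerivAt (fun y => Real.sqrt (r ^ 2 - y ^ 2)) (-x / Real.sqrt (r ^ 2 - x ^ 2)) x := by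
  have h0 : (0:ℝ) < r ^ 2 - x ^ 2 := by linarith
  have h1 : HasDerivAt (fun y : ℝ => r ^ 2 - y ^ 2) (-(2 * x)) x := by
    simpa using (hasDerivAt_pow 2 x).const_sub (r ^ 2)
  have h2 := (Real.hasDerivAt_sqrt h0.ne').comp x h1
  have hs : Real.sqrt (r ^ 2 - x ^ 2) ≠ 0 := (Real.sqrt_pos.mpr h0).ne'
  refine h2.congr_deriv ?_
  field_simp

lemma termDeriv (r x : ℝ) (h : x ^ 2 < r ^ 2) :
    HasDerivAt (fun y => y / Real.sqrt (r ^ 2 - y ^ 2))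
      (r ^ 2 / Real.sqrt (r ^ 2 - x ^ 2) ^ 3) x := by
  have h0 : (0:ℝ) < r ^ 2 - x ^ 2 := by linarith
  have hs : 0 < Real.sqrt (r ^ 2 - x ^ 2) := Real.sqrt_pos.mpr h0
  have h2 := (hasDerivAt_id x).div (sqrtDeriv r x h) hs.ne'
  refine h2.congr_deriv ?_
  have hsq : Real.sqrt (r ^ 2 - x ^ 2) ^ 2 = r ^ 2 - x ^ 2 := Real.sq_sqrt h0.le
  field_simp
  simp only [id_eq]
  linear_combination 1 * hsq
set_option maxHeartbeats 800000

lemma gapIneq (r1 r2 ε x a b : ℝ) (hr1 : 0 < r1) (hr2 : 0 < r2) (hε : 0 ≤ ε)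
    (ha : 0 < a) (hb : 0 < b) (ha2 : a ^ 2 = r1 ^ 2 - x ^ 2) (hb2 : b ^ 2 = r2 ^ 2 - x ^ 2)
    (hx : 0 < x ^ 2) :
    (1 / 2) * (x / a + x / b) ^ 2 <
      (r1 ^ 2 / a ^ 3 + r2 ^ 2 / b ^ 3) * (2 * ε + (r1 - a) + (r2 - b)) := by
  have har : a < r1 := by nlinarith
  have hbr : b < r2 := by nlinarith
  have hP : 0 < r1 ^ 2 * b ^ 3 + r2 ^ 2 * a ^ 3 := by positivity
  have hA1 : x ^ 2 < 2 * r1 * (r1 - a) := by nlinarith [sq_nonneg (r1 - a)]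
  have hA2 : x ^ 2 < 2 * r2 * (r2 - b) := by nlinarith [sq_nonneg (r2 - b)]
  have hB : a * b * (a + b) ^ 2 * (r1 * r2) ≤ (r1 ^ 2 * b ^ 3 + r2 ^ 2 * a ^ 3) * (r1 + r2) := by
    nlinarith [mul_nonneg (by positivity : (0:ℝ) ≤ r1 * b + r2 * a) (sq_nonneg (r1 * b - r2 * a)),
      mul_nonneg (by positivity : (0:ℝ) ≤ r1 * b * (r2 * a)) (mul_nonneg (sub_nonneg.2 hbr.le) ha.le),
      mul_nonneg (by positivity : (0:ℝ) ≤ r1 * r2 * b ^ 3) (sub_nonneg.2 har.le),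
      mul_nonneg (by positivity : (0:ℝ) ≤ r1 * r2 * a ^ 3) (sub_nonneg.2 hbr.le),
      mul_nonneg (by positivity : (0:ℝ) ≤ r1 * b * (r2 * a)) (sub_nonneg.2 (by nlinarith : a * b ≤ r1 * b)),
      mul_nonneg (by positivity : (0:ℝ) ≤ r1 * b * (r2 * a)) (sub_nonneg.2 (by nlinarith : a * b ≤ r2 * a))]
  have step1 : x ^ 2 * (r1 + r2) < 2 * r1 * r2 * ((r1 - a) + (r2 - b)) := by nlinarith
  have step3 : x ^ 2 * ((r1 ^ 2 * b ^ 3 + r2 ^ 2 * a ^ 3) * (r1 + r2)) <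
      2 * r1 * r2 * ((r1 - a) + (r2 - b)) * (r1 ^ 2 * b ^ 3 + r2 ^ 2 * a ^ 3) := by nlinarith
  have hpoly : x ^ 2 * (a * b * (a + b) ^ 2) <
      2 * ((r1 - a) + (r2 - b)) * (r1 ^ 2 * b ^ 3 + r2 ^ 2 * a ^ 3) := by
    have h4 : x ^ 2 * (a * b * (a + b) ^ 2 * (r1 * r2)) <
        2 * r1 * r2 * ((r1 - a) + (r2 - b)) * (r1 ^ 2 * b ^ 3 + r2 ^ 2 * a ^ 3) :=
      lt_of_le_of_lt (by nlinarith [mul_le_mul_of_nonneg_left hB hx.le]) step3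
    have hrr : 0 < r1 * r2 := mul_pos hr1 hr2
    nlinarith [h4]
  have e1 : (x / a + x / b) ^ 2 = x ^ 2 * (a + b) ^ 2 / (a * b) ^ 2 := by
    field_simp
    ring
  have e2 : r1 ^ 2 / a ^ 3 + r2 ^ 2 / b ^ 3 = (r1 ^ 2 * b ^ 3 + r2 ^ 2 * a ^ 3) / (a ^ 3 * b ^ 3) := by
    rw [div_add_div _ _ (by positivity : (a:ℝ) ^ 3 ≠ 0) (by positivity : (b:ℝ) ^ 3 ≠ 0)]
    ring_nf
  rw [e1, e2, show (1:ℝ) / 2 * (x ^ 2 * (a + b) ^ 2 / (a * b) ^ 2) =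
      x ^ 2 * (a + b) ^ 2 / (2 * (a * b) ^ 2) by ring,
    div_mul_eq_mul_div, div_lt_div_iff₀ (by positivity) (by positivity)]
  nlinarith [mul_lt_mul_of_pos_right hpoly (show (0:ℝ) < a ^ 2 * b ^ 2 by positivity),
    mul_nonneg (mul_nonneg hε hP.le) (show (0:ℝ) ≤ a ^ 2 * b ^ 2 by positivity)]

/-- The gap width `δ` between two nearly touching disks satisfies
`δ'' δ > (1/2) (δ')^2` away from the contact point. -/
theorem stmt7 (r1 r2 ε : ℝ) (hr1 : 0 < r1) (hr2 : 0 < r2) (hε : 0 ≤ ε)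
    (δ : ℝ → ℝ)
    (hδ : ∀ x, δ x = 2 * ε + (r1 - Real.sqrt (r1 ^ 2 - x ^ 2))
      + (r2 - Real.sqrt (r2 ^ 2 - x ^ 2))) :
    ∀ x : ℝ, 0 < |x| → |x| < min r1 r2 / 2 →
      deriv (deriv δ) x * δ x > (1 / 2) * (deriv δ x) ^ 2 := by
  have hδf : δ = fun x => 2 * ε + (r1 - Real.sqrt (r1 ^ 2 - x ^ 2))
      + (r2 - Real.sqrt (r2 ^ 2 - x ^ 2)) := funext hδ
  intro x hx0 hx2
  have hm0 : 0 < min r1 r2 := lt_min hr1 hr2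
  have hxm : |x| < min r1 r2 := lt_of_lt_of_le hx2 (by linarith)
  have sqlt : ∀ y : ℝ, |y| < min r1 r2 → y ^ 2 < r1 ^ 2 ∧ y ^ 2 < r2 ^ 2 := by
    intro y hy
    have h1 : |y| < r1 := lt_of_lt_of_le hy (min_le_left _ _)
    have h2 : |y| < r2 := lt_of_lt_of_le hy (min_le_right _ _)
    constructor <;> nlinarith [sq_abs y, abs_nonneg y]
  have key : ∀ y : ℝ, |y| < min r1 r2 → HasDerivAt δ
      (y / Real.sqrt (r1 ^ 2 - y ^ 2) + y / Real.sqrt (r2 ^ 2 - y ^ 2)) y := by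
    intro y hy
    obtain ⟨h1, h2⟩ := sqlt y hy
    have d1 := (sqrtDeriv r1 y h1).const_sub r1
    have d2 := (sqrtDeriv r2 y h2).const_sub r2
    have d3 := ((d1.add d2).const_add (2 * ε))
    rw [hδf]
    have heq : (fun x => 2 * ε + (r1 - Real.sqrt (r1 ^ 2 - x ^ 2))
        + (r2 - Real.sqrt (r2 ^ 2 - x ^ 2))) = fun x => 2 * ε +
        ((r1 - Real.sqrt (r1 ^ 2 - x ^ 2)) + (r2 - Real.sqrt (r2 ^ 2 - x ^ 2))) := by
      funext z; ring
    rw [heq]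
    refine d3.congr_deriv ?_
    ring
  have hev : deriv δ =ᶠ[nhds x]
      (fun y => y / Real.sqrt (r1 ^ 2 - y ^ 2) + y / Real.sqrt (r2 ^ 2 - y ^ 2)) := by
    have hopen : IsOpen {y : ℝ | |y| < min r1 r2} :=
      isOpen_lt continuous_abs continuous_const
    filter_upwards [hopen.mem_nhds hxm] with y hy using (key y hy).deriv
  obtain ⟨hx1, hx2'⟩ := sqlt x hxm
  have h2nd : HasDerivAt
      (fun y => y / Real.sqrt (r1 ^ 2 - y ^ 2) + y / Real.sqrt (r2 ^ 2 - y ^ 2))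
      (r1 ^ 2 / Real.sqrt (r1 ^ 2 - x ^ 2) ^ 3 + r2 ^ 2 / Real.sqrt (r2 ^ 2 - x ^ 2) ^ 3) x :=
    (termDeriv r1 x hx1).add (termDeriv r2 x hx2')
  rw [hev.deriv_eq, h2nd.deriv, (key x hxm).deriv, hδ x]
  have ha : 0 < Real.sqrt (r1 ^ 2 - x ^ 2) := Real.sqrt_pos.mpr (by linarith)
  have hb : 0 < Real.sqrt (r2 ^ 2 - x ^ 2) := Real.sqrt_pos.mpr (by linarith)
  have ha2 : Real.sqrt (r1 ^ 2 - x ^ 2) ^ 2 = r1 ^ 2 - x ^ 2 := Real.sq_sqrt (by linarith)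
  have hb2 : Real.sqrt (r2 ^ 2 - x ^ 2) ^ 2 = r2 ^ 2 - x ^ 2 := Real.sq_sqrt (by linarith)
  have hxx : 0 < x ^ 2 := by have := abs_pos.mp hx0; positivity
  exact gapIneq r1 r2 ε x _ _ hr1 hr2 hε ha hb ha2 hb2 hxx
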